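/- Let A be the N×N symmetric matrix of a graph, u = {1,...,p} with 1 ≤ p < N and ū = {p+1,...,N}, and let A^{(n)} be the (p + n(N−p))×(p + n(N−p)) symmetric matrix of the star product of n copies of the graph merged along u: A^{(n)} has top-left block A_{uu}, the block A_{uū} repeated n times along the first block row, A_{ūu} repeated n times along the first block column, and block-diagonal blocks A_{ūū}, all other blocks zero. Then for all nonnegative integers k₁,...,k_p, as n → ∞, n^{−(k₁+···+k_p)/2} · det(A^{(n)}[k₁,...,k_p,0,...,0]) converges to det(D[k₁/2,...,k_p/2]) if all k_i are even, and to 0 otherwise, where D = A_{uū}A_{ūu}, and for a square matrix M, M[m₁,...,m_p] denotes the p×p matrix whose i-th column is the i-th column of M^{m_i} (with M⁰ = I); A^{(n)}[k₁,...,k_p,0,...,0] is the matrix whose i-th column is the i-th column of (A^{(n)})^{k_i} for i ≤ p and the i-th standard basis column for i > p. -/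

import Mathlib

open Matrix BigOperators Filter

/-- The adjacency matrix of the star product of `n` copies of a graph merged along the
first block of `p` vertices: indices are `Fin p ⊕ (Fin n × Fin q)`. -/
def starProductMatrix {p q : ℕ} (A : Matrix (Fin p ⊕ Fin q) (Fin p ⊕ Fin q) ℝ) (n : ℕ) :
    Matrix (Fin p ⊕ Fin n × Fin q) (Fin p ⊕ Fin n × Fin q) ℝ :=
  Matrix.of fun r c =>
    match r, c with
    | Sum.inl i, Sum.inl i' => A (Sum.inl i) (Sum.inl i')
    | Sum.inl i, Sum.inr mj => A (Sum.inl i) (Sum.inr mj.2)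
    | Sum.inr mj, Sum.inl i => A (Sum.inr mj.2) (Sum.inl i)
    | Sum.inr mj, Sum.inr mj' =>
        if mj.1 = mj'.1 then A (Sum.inr mj.2) (Sum.inr mj'.2) else 0

/-- The matrix `A^{(n)}[k₁,...,k_p,0,...,0]`: its `i`-th column is the `i`-th column of
`(A^{(n)})^{k_i}` for `i` in the first block, and the corresponding column of the identity
matrix otherwise. -/
def starMixedPowers {p q : ℕ} (A : Matrix (Fin p ⊕ Fin q) (Fin p ⊕ Fin q) ℝ) (n : ℕ)
    (k : Fin p → ℕ) : Matrix (Fin p ⊕ Fin n × Fin q) (Fin p ⊕ Fin n × Fin q) ℝ :=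
  Matrix.of fun r c =>
    match c with
    | Sum.inl i => ((starProductMatrix A n) ^ (k i)) r (Sum.inl i)
    | Sum.inr x => (1 : Matrix (Fin p ⊕ Fin n × Fin q) (Fin p ⊕ Fin n × Fin q) ℝ) r (Sum.inr x)

open Polynomial in
/-- Polynomial "compressed" matrix for the star product: `X` marks the upper-right block. -/
noncomputable def starPolyMatrix {p q : ℕ} (A : Matrix (Fin p ⊕ Fin q) (Fin p ⊕ Fin q) ℝ) :
    Matrix (Fin p ⊕ Fin q) (Fin p ⊕ Fin q) ℝ[X] :=
  Matrix.of fun r c =>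
    match r, c with
    | Sum.inl i, Sum.inl i' => C (A (Sum.inl i) (Sum.inl i'))
    | Sum.inl i, Sum.inr j => X * C (A (Sum.inl i) (Sum.inr j))
    | Sum.inr j, Sum.inl i => C (A (Sum.inr j) (Sum.inl i))
    | Sum.inr j, Sum.inr j' => C (A (Sum.inr j) (Sum.inr j'))

open Polynomial in
lemma star_pow_eq_poly {p q : ℕ} (A : Matrix (Fin p ⊕ Fin q) (Fin p ⊕ Fin q) ℝ)
    (n : ℕ) (t : ℕ) :
    (∀ i i', (starProductMatrix A n ^ t) (Sum.inl i) (Sum.inl i')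
      = eval (n : ℝ) ((starPolyMatrix A ^ t) (Sum.inl i) (Sum.inl i')))
    ∧ (∀ (m : Fin n) (j : Fin q) (i' : Fin p),
        (starProductMatrix A n ^ t) (Sum.inr (m, j)) (Sum.inl i')
      = eval (n : ℝ) ((starPolyMatrix A ^ t) (Sum.inr j) (Sum.inl i'))) := by
  induction t with
  | zero =>
      constructor
      · intro i i'
        by_cases h : i = i' <;> simp [Matrix.one_apply, h]
      · intro m j i'
        simp [Matrix.one_apply]
  | succ t ih =>
      constructor
      · intro i i'
        rw [pow_succ', pow_succ', Matrix.mul_apply, Matrix.mul_apply]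
        rw [Fintype.sum_sum_type, Fintype.sum_sum_type]
        simp only [eval_add, eval_finset_sum, eval_mul]
        rw [Fintype.sum_prod_type]
        congr 1
        · apply Finset.sum_congr rfl
          intro i'' _
          rw [ih.1]
          simp [starProductMatrix, starPolyMatrix]
        · -- inr sum: n copies
          have h1 : ∀ m : Fin n, ∀ j : Fin q,
              starProductMatrix A n (Sum.inl i) (Sum.inr (m, j))
                * (starProductMatrix A n ^ t) (Sum.inr (m, j)) (Sum.inl i')
              = A (Sum.inl i) (Sum.inr j)
                * eval (n : ℝ) ((starPolyMatrix A ^ t) (Sum.inr j) (Sum.inl i')) := by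
            intro m j
            rw [ih.2]
            simp [starProductMatrix]
          calc (∑ m : Fin n, ∑ j : Fin q,
                  starProductMatrix A n (Sum.inl i) (Sum.inr (m, j))
                    * (starProductMatrix A n ^ t) (Sum.inr (m, j)) (Sum.inl i'))
              = ∑ m : Fin n, ∑ j : Fin q, A (Sum.inl i) (Sum.inr j)
                  * eval (n : ℝ) ((starPolyMatrix A ^ t) (Sum.inr j) (Sum.inl i')) := by
                apply Finset.sum_congr rfl; intro m _
                apply Finset.sum_congr rfl; intro j _
                exact h1 m j
            _ = ∑ j : Fin q, eval (n : ℝ) (starPolyMatrix A (Sum.inl i) (Sum.inr j))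
                  * eval (n : ℝ) ((starPolyMatrix A ^ t) (Sum.inr j) (Sum.inl i')) := by
                rw [Finset.sum_const, Finset.card_univ, Fintype.card_fin, nsmul_eq_mul,
                  Finset.mul_sum]
                apply Finset.sum_congr rfl; intro j _
                simp only [starPolyMatrix, Matrix.of_apply, eval_mul, eval_X, eval_C]
                ring
      · intro m j i'
        rw [pow_succ', pow_succ', Matrix.mul_apply, Matrix.mul_apply]
        rw [Fintype.sum_sum_type, Fintype.sum_sum_type]
        simp only [eval_add, eval_finset_sum, eval_mul]
        rw [Fintype.sum_prod_type]
        congr 1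
        · apply Finset.sum_congr rfl
          intro i'' _
          rw [ih.1]
          simp [starProductMatrix, starPolyMatrix]
        · -- the if collapses the m-sum to a single term
          rw [Finset.sum_eq_single m]
          · apply Finset.sum_congr rfl
            intro j' _
            rw [ih.2]
            simp [starProductMatrix, starPolyMatrix]
          · intro m' _ hm'
            apply Finset.sum_eq_zero
            intro j' _
            simp [starProductMatrix, Ne.symm hm']
          · intro hm; exact absurd (Finset.mem_univ m) hm

open Polynomial in
lemma starPoly_pow_bounds {p q : ℕ} (A : Matrix (Fin p ⊕ Fin q) (Fin p ⊕ Fin q) ℝ) (t : ℕ) :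
    (∀ i i', degree ((starPolyMatrix A ^ t) (Sum.inl i) (Sum.inl i')) ≤ (t / 2 : ℕ))
    ∧ (∀ j i', degree ((starPolyMatrix A ^ t) (Sum.inr j) (Sum.inl i')) ≤ ((t - 1) / 2 : ℕ))
    ∧ (t = 0 → ∀ j i', (starPolyMatrix A ^ t) (Sum.inr j) (Sum.inl i') = 0)
    ∧ (∀ i i', Even t → coeff ((starPolyMatrix A ^ t) (Sum.inl i) (Sum.inl i')) (t / 2)
        = ((A.toBlocks₁₂ * A.toBlocks₂₁) ^ (t / 2)) i i')
    ∧ (∀ j i', Odd t → coeff ((starPolyMatrix A ^ t) (Sum.inr j) (Sum.inl i')) (t / 2)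
        = (A.toBlocks₂₁ * (A.toBlocks₁₂ * A.toBlocks₂₁) ^ (t / 2)) j i') := by
  induction t with
  | zero =>
      refine ⟨?_, ?_, ?_, ?_, ?_⟩
      · intro i i'
        simp only [pow_zero, Matrix.one_apply]
        split <;> simp [degree_one_le, degree_C_le]
      · intro j i'
        simp [Matrix.one_apply]
      · intro _ j i'
        simp [Matrix.one_apply]
      · intro i i' _
        simp [Matrix.one_apply, Matrix.one_apply (i := i) (j := i'), pow_zero]
        split <;> simp_all [Matrix.one_apply]
      · intro j i' h
        exact absurd h (by simp)
  | succ t ih =>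
      obtain ⟨dll, drl, z0, cll, crl⟩ := ih
      have hentry_ll : ∀ i i', (starPolyMatrix A ^ (t+1)) (Sum.inl i) (Sum.inl i')
          = (∑ i'' : Fin p, C (A (Sum.inl i) (Sum.inl i''))
              * (starPolyMatrix A ^ t) (Sum.inl i'') (Sum.inl i'))
            + ∑ j : Fin q, X * C (A (Sum.inl i) (Sum.inr j))
              * (starPolyMatrix A ^ t) (Sum.inr j) (Sum.inl i') := by
        intro i i'
        rw [pow_succ', Matrix.mul_apply, Fintype.sum_sum_type]
        congr 1 <;> (apply Finset.sum_congr rfl; intro x _; simp [starPolyMatrix])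
      have hentry_rl : ∀ j i', (starPolyMatrix A ^ (t+1)) (Sum.inr j) (Sum.inl i')
          = (∑ i'' : Fin p, C (A (Sum.inr j) (Sum.inl i''))
              * (starPolyMatrix A ^ t) (Sum.inl i'') (Sum.inl i'))
            + ∑ j' : Fin q, C (A (Sum.inr j) (Sum.inr j'))
              * (starPolyMatrix A ^ t) (Sum.inr j') (Sum.inl i') := by
        intro j i'
        rw [pow_succ', Matrix.mul_apply, Fintype.sum_sum_type]
        congr 1 <;> (apply Finset.sum_congr rfl; intro x _; simp [starPolyMatrix])
      refine ⟨?_, ?_, ?_, ?_, ?_⟩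
      · -- degree bound inl-inl
        intro i i'
        rw [hentry_ll]
        apply degree_add_le_of_degree_le
        · apply (degree_sum_le _ _).trans
          apply Finset.sup_le
          intro i'' _
          apply (degree_mul_le _ _).trans
          calc degree (C (A (Sum.inl i) (Sum.inl i'')))
                + degree ((starPolyMatrix A ^ t) (Sum.inl i'') (Sum.inl i'))
              ≤ 0 + ((t / 2 : ℕ) : WithBot ℕ) := add_le_add degree_C_le (dll i'' i')
            _ ≤ (((t+1) / 2 : ℕ) : WithBot ℕ) := by
                rw [zero_add]; exact_mod_cast Nat.div_le_div_right (Nat.le_succ t)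
        · apply (degree_sum_le _ _).trans
          apply Finset.sup_le
          intro j _
          rcases Nat.eq_zero_or_pos t with ht | ht
          · rw [z0 ht, mul_zero]; simp
          · apply (degree_mul_le _ _).trans
            calc degree (X * C (A (Sum.inl i) (Sum.inr j)))
                  + degree ((starPolyMatrix A ^ t) (Sum.inr j) (Sum.inl i'))
                ≤ 1 + (((t - 1) / 2 : ℕ) : WithBot ℕ) := by
                  apply add_le_add _ (drl j i')
                  apply (degree_mul_le _ _).trans
                  rw [degree_X]
                  calc (1 : WithBot ℕ) + degree (C (A (Sum.inl i) (Sum.inr j)))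
                      ≤ 1 + 0 := add_le_add le_rfl degree_C_le
                    _ = 1 := by simp
              _ ≤ (((t+1) / 2 : ℕ) : WithBot ℕ) := by
                  have : (1 : WithBot ℕ) + (((t - 1) / 2 : ℕ) : WithBot ℕ)
                      = ((1 + (t-1)/2 : ℕ) : WithBot ℕ) := by push_cast; ring
                  rw [this]
                  exact_mod_cast (by omega : 1 + (t-1)/2 ≤ (t+1)/2)
      · -- degree bound inr-inl
        intro j i'
        rw [hentry_rl]
        apply degree_add_le_of_degree_le
        · apply (degree_sum_le _ _).trans
          apply Finset.sup_le
          intro i'' _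
          apply (degree_mul_le _ _).trans
          calc degree (C (A (Sum.inr j) (Sum.inl i'')))
                + degree ((starPolyMatrix A ^ t) (Sum.inl i'') (Sum.inl i'))
              ≤ 0 + ((t / 2 : ℕ) : WithBot ℕ) := add_le_add degree_C_le (dll i'' i')
            _ = (((t+1-1) / 2 : ℕ) : WithBot ℕ) := by rw [zero_add]; norm_num
        · apply (degree_sum_le _ _).trans
          apply Finset.sup_le
          intro j' _
          apply (degree_mul_le _ _).trans
          calc degree (C (A (Sum.inr j) (Sum.inr j')))
                + degree ((starPolyMatrix A ^ t) (Sum.inr j') (Sum.inl i'))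
              ≤ 0 + (((t-1) / 2 : ℕ) : WithBot ℕ) := add_le_add degree_C_le (drl j' i')
            _ ≤ (((t+1-1) / 2 : ℕ) : WithBot ℕ) := by
                rw [zero_add]
                exact_mod_cast Nat.div_le_div_right (by omega)
      · intro h; omega
      · -- coeff inl-inl, t+1 even
        intro i i' hev
        obtain ⟨m, hm⟩ := hev
        have ht : t = 2 * m - 1 := by omega
        have hm1 : 1 ≤ m := by omega
        have htodd : Odd t := by rw [ht]; exact ⟨m - 1, by omega⟩
        have ht2 : t / 2 = m - 1 := by omega
        have hd2 : (t + 1) / 2 = m := by omega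
        rw [hentry_ll, coeff_add, hd2]
        have h1 : coeff (∑ i'' : Fin p, C (A (Sum.inl i) (Sum.inl i''))
            * (starPolyMatrix A ^ t) (Sum.inl i'') (Sum.inl i')) m = 0 := by
          rw [finset_sum_coeff]
          apply Finset.sum_eq_zero
          intro i'' _
          apply coeff_eq_zero_of_degree_lt
          apply lt_of_le_of_lt (degree_mul_le _ _)
          calc degree (C (A (Sum.inl i) (Sum.inl i'')))
                + degree ((starPolyMatrix A ^ t) (Sum.inl i'') (Sum.inl i'))
              ≤ 0 + ((t / 2 : ℕ) : WithBot ℕ) := add_le_add degree_C_le (dll i'' i')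
            _ < (m : WithBot ℕ) := by
                rw [zero_add]; exact_mod_cast (by omega : t / 2 < m)
        rw [h1, zero_add, finset_sum_coeff]
        obtain ⟨m', rfl⟩ : ∃ m', m = m' + 1 := ⟨m - 1, by omega⟩
        have ht2' : t / 2 = m' := by omega
        have h2 : ∀ j : Fin q, coeff (X * C (A (Sum.inl i) (Sum.inr j))
            * (starPolyMatrix A ^ t) (Sum.inr j) (Sum.inl i')) (m' + 1)
            = A.toBlocks₁₂ i j
              * (A.toBlocks₂₁ * (A.toBlocks₁₂ * A.toBlocks₂₁) ^ m') j i' := by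
          intro j
          rw [mul_assoc, coeff_X_mul, coeff_C_mul]
          have := crl j i' htodd
          rw [ht2'] at this
          rw [this]
          rfl
        rw [Finset.sum_congr rfl fun j _ => h2 j, ← Matrix.mul_apply, pow_succ', Matrix.mul_assoc]
      · -- coeff inr-inl, t+1 odd
        intro j i' hodd
        have htev : Even t := by
          rcases Nat.even_or_odd t with h | h
          · exact h
          · exact absurd hodd (by simp [Nat.odd_add, parity_simps, h])
        obtain ⟨m, hm⟩ := htev
        have ht : t = 2 * m := by omega
        have ht2 : t / 2 = m := by omega
        have hd2 : (t + 1) / 2 = m := by omega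
        rw [hentry_rl, coeff_add, hd2]
        have h1 : coeff (∑ i'' : Fin p, C (A (Sum.inr j) (Sum.inl i''))
            * (starPolyMatrix A ^ t) (Sum.inl i'') (Sum.inl i')) m
            = ∑ i'' : Fin p, A.toBlocks₂₁ j i''
                * ((A.toBlocks₁₂ * A.toBlocks₂₁) ^ m) i'' i' := by
          rw [finset_sum_coeff]
          apply Finset.sum_congr rfl
          intro i'' _
          rw [coeff_C_mul]
          have := cll i'' i' ⟨m, by omega⟩
          rw [ht2] at this
          rw [this]
          rfl
        have h2 : coeff (∑ j' : Fin q, C (A (Sum.inr j) (Sum.inr j'))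
            * (starPolyMatrix A ^ t) (Sum.inr j') (Sum.inl i')) m = 0 := by
          rw [finset_sum_coeff]
          apply Finset.sum_eq_zero
          intro j' _
          rcases Nat.eq_zero_or_pos t with h0 | h0
          · rw [z0 h0, mul_zero, coeff_zero]
          · apply coeff_eq_zero_of_degree_lt
            apply lt_of_le_of_lt (degree_mul_le _ _)
            calc degree (C (A (Sum.inr j) (Sum.inr j')))
                  + degree ((starPolyMatrix A ^ t) (Sum.inr j') (Sum.inl i'))
                ≤ 0 + (((t - 1) / 2 : ℕ) : WithBot ℕ) := add_le_add degree_C_le (drl j' i')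
              _ < (m : WithBot ℕ) := by
                  rw [zero_add]; exact_mod_cast (by omega : (t - 1) / 2 < m)
        rw [h1, h2, add_zero, ← Matrix.mul_apply]

open Polynomial in
lemma poly_div_pow_tendsto (P : ℝ[X]) (d : ℕ) (h : P.degree ≤ (d : ℕ)) :
    Filter.Tendsto (fun x : ℝ => P.eval x / x ^ d) Filter.atTop (nhds (P.coeff d)) := by
  have hnd : P.natDegree < d + 1 := Nat.lt_succ_of_le (natDegree_le_iff_degree_le.mpr h)
  have heval : ∀ x : ℝ, P.eval x / x ^ d
      = ∑ t ∈ Finset.range (d + 1), P.coeff t * (x ^ t / x ^ d) := by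
    intro x
    rw [eval_eq_sum_range' hnd, Finset.sum_div]
    apply Finset.sum_congr rfl
    intro t _
    ring
  simp only [heval]
  have hlim : ∀ t ∈ Finset.range (d+1), Tendsto (fun x : ℝ => P.coeff t * (x ^ t / x ^ d))
      atTop (nhds (if t = d then P.coeff d else 0)) := by
    intro t ht
    rcases eq_or_ne t d with rfl | hne
    · simp only [if_pos rfl]
      have hev : ∀ᶠ x : ℝ in atTop, P.coeff t = P.coeff t * (x ^ t / x ^ t) :=
        (eventually_gt_atTop 0).mono fun x hx => by
          rw [div_self (pow_ne_zero _ hx.ne'), mul_one]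
      exact Tendsto.congr' hev tendsto_const_nhds
    · have htd : t < d := by
        simp only [Finset.mem_range] at ht; omega
      rw [if_neg hne]
      simpa using (tendsto_pow_div_pow_atTop_zero (𝕜 := ℝ) htd).const_mul (P.coeff t)
  have hsum := tendsto_finset_sum (Finset.range (d+1)) hlim
  simpa [Finset.sum_ite_eq'] using hsum

open Polynomial in
lemma entry_tendsto (P : ℝ[X]) (c : ℕ) (h : P.degree ≤ ((c / 2 : ℕ) : WithBot ℕ)) :
    Filter.Tendsto (fun n : ℕ => P.eval (n : ℝ) / (Real.sqrt n) ^ c) Filter.atTop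
      (nhds (if Even c then P.coeff (c / 2) else 0)) := by
  have hb := (poly_div_pow_tendsto P (c / 2) h).comp
    (tendsto_natCast_atTop_atTop (R := ℝ))
  rcases Nat.even_or_odd c with hev | hodd
  · obtain ⟨m, hm⟩ := hev
    have hc2 : c / 2 = m := by omega
    rw [if_pos ⟨m, hm⟩]
    apply hb.congr
    intro n
    have hs : (Real.sqrt n) ^ c = ((n : ℝ)) ^ m := by
      rw [hm, ← two_mul, pow_mul, Real.sq_sqrt (by positivity)]
    simp [Function.comp, hs, hc2]
  · have hnev : ¬ Even c := Nat.not_even_iff_odd.mpr hodd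
    obtain ⟨m, hm⟩ := hodd
    have hc2 : c / 2 = m := by omega
    rw [if_neg hnev]
    have hsqrt : Tendsto (fun x : ℝ => Real.sqrt x) atTop atTop := by
      exact (tendsto_rpow_atTop (by norm_num : (0:ℝ) < 1/2)).congr
        fun x => (Real.sqrt_eq_rpow x).symm
    have hsq : Tendsto (fun n : ℕ => (Real.sqrt n)⁻¹) atTop (nhds 0) :=
      tendsto_inv_atTop_zero.comp (hsqrt.comp (tendsto_natCast_atTop_atTop (R := ℝ)))
    have hmul := hb.mul hsq
    rw [mul_zero] at hmul
    apply hmul.congr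
    intro n
    have hs : (Real.sqrt n) ^ c = ((n : ℝ)) ^ m * Real.sqrt n := by
      rw [hm, pow_succ, pow_mul, Real.sq_sqrt (by positivity)]
    rw [Function.comp, hs]
    rw [← div_div, div_eq_mul_inv (P.eval (n:ℝ) / ((n:ℝ)) ^ m), hc2]

theorem star_graph_moment_limit (p q : ℕ) (hp : 1 ≤ p) (hq : 1 ≤ q)
    (A : Matrix (Fin p ⊕ Fin q) (Fin p ⊕ Fin q) ℝ) (hsymm : Aᵀ = A)
    (k : Fin p → ℕ) :
    Filter.Tendsto
      (fun n : ℕ =>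
        Matrix.det (starMixedPowers A n k) / (Real.sqrt n) ^ (∑ i : Fin p, k i))
      Filter.atTop
      (nhds (if ∀ i : Fin p, Even (k i) then
          Matrix.det (Matrix.of fun i j : Fin p =>
            ((A.toBlocks₁₂ * A.toBlocks₂₁) ^ (k j / 2)) i j)
        else 0)) := by
  classical
  -- Step 1: the determinant reduces to the p×p upper-left block
  have hdet : ∀ n : ℕ, Matrix.det (starMixedPowers A n k)
      = Matrix.det (Matrix.of fun i j : Fin p =>
          Polynomial.eval ((n : ℝ)) ((starPolyMatrix A ^ (k j)) (Sum.inl i) (Sum.inl j))) := by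
    intro n
    have hblock : starMixedPowers A n k = Matrix.fromBlocks
        (Matrix.of fun i j : Fin p =>
          ((starProductMatrix A n) ^ (k j)) (Sum.inl i) (Sum.inl j))
        0
        (Matrix.of fun (x : Fin n × Fin q) (j : Fin p) =>
          ((starProductMatrix A n) ^ (k j)) (Sum.inr x) (Sum.inl j))
        1 := by
      ext r c
      rcases r with r | r <;> rcases c with c | c <;>
        simp [starMixedPowers, Matrix.fromBlocks, Matrix.one_apply]
    rw [hblock, Matrix.det_fromBlocks_zero₁₂, Matrix.det_one, mul_one]
    congr 1
    ext i j
    simp only [Matrix.of_apply]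
    exact (star_pow_eq_poly A n (k j)).1 i j
  -- Step 2: pull the normalization into the columns
  have key : ∀ n : ℕ, Matrix.det (starMixedPowers A n k) / (Real.sqrt n) ^ (∑ i : Fin p, k i)
      = Matrix.det (Matrix.of fun i j : Fin p =>
          Polynomial.eval ((n : ℝ)) ((starPolyMatrix A ^ (k j)) (Sum.inl i) (Sum.inl j))
            / (Real.sqrt n) ^ (k j)) := by
    intro n
    rw [hdet n]
    have hrw : (Matrix.of fun i j : Fin p =>
        Polynomial.eval ((n : ℝ)) ((starPolyMatrix A ^ (k j)) (Sum.inl i) (Sum.inl j))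
          / (Real.sqrt n) ^ (k j))
        = Matrix.of fun i j : Fin p => (((Real.sqrt n) ^ (k j))⁻¹) *
            (Matrix.of fun i j : Fin p =>
              Polynomial.eval ((n : ℝ)) ((starPolyMatrix A ^ (k j)) (Sum.inl i) (Sum.inl j))) i j := by
      ext i j
      simp only [Matrix.of_apply]
      rw [div_eq_mul_inv, mul_comm]
    rw [hrw, Matrix.det_mul_row]
    have hprod : (∏ i : Fin p, ((Real.sqrt n) ^ (k i))⁻¹)
        = ((Real.sqrt n) ^ (∑ i : Fin p, k i))⁻¹ := by
      rw [← Finset.prod_pow_eq_pow_sum, Finset.prod_inv_distrib]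
    rw [hprod, div_eq_mul_inv, mul_comm]
  -- Step 3: entrywise limits
  set L : Matrix (Fin p) (Fin p) ℝ := Matrix.of fun i j : Fin p =>
    if Even (k j) then ((A.toBlocks₁₂ * A.toBlocks₂₁) ^ (k j / 2)) i j else 0 with hL
  have hent : ∀ i j : Fin p, Filter.Tendsto (fun n : ℕ =>
      Polynomial.eval ((n : ℝ)) ((starPolyMatrix A ^ (k j)) (Sum.inl i) (Sum.inl j))
        / (Real.sqrt n) ^ (k j)) Filter.atTop (nhds (L i j)) := by
    intro i j
    have hdeg := (starPoly_pow_bounds A (k j)).1 i j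
    have hlim := entry_tendsto _ (k j) hdeg
    have hLval : L i j = if Even (k j) then
        Polynomial.coeff ((starPolyMatrix A ^ (k j)) (Sum.inl i) (Sum.inl j)) (k j / 2)
        else 0 := by
      by_cases hev : Even (k j)
      · simp only [hL, Matrix.of_apply, if_pos hev]
        exact ((starPoly_pow_bounds A (k j)).2.2.2.1 i j hev).symm
      · simp only [hL, Matrix.of_apply, if_neg hev]
    rw [hLval]
    exact hlim
  have hmat : Filter.Tendsto (fun n : ℕ => Matrix.of fun i j : Fin p =>
      Polynomial.eval ((n : ℝ)) ((starPolyMatrix A ^ (k j)) (Sum.inl i) (Sum.inl j))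
        / (Real.sqrt n) ^ (k j)) Filter.atTop (nhds L) := by
    apply tendsto_pi_nhds.2
    intro i
    rw [tendsto_pi_nhds]
    intro j
    exact hent i j
  have hcont : Continuous fun M : Matrix (Fin p) (Fin p) ℝ => M.det :=
    Continuous.matrix_det continuous_id
  have hdetlim := (hcont.tendsto L).comp hmat
  -- Step 4: identify the limit
  have hLdet : L.det = (if ∀ i : Fin p, Even (k i) then
      Matrix.det (Matrix.of fun i j : Fin p =>
        ((A.toBlocks₁₂ * A.toBlocks₂₁) ^ (k j / 2)) i j)
      else 0) := by
    by_cases hall : ∀ i : Fin p, Even (k i)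
    · rw [if_pos hall]
      congr 1
      ext i j
      simp [hL, hall j]
    · rw [if_neg hall]
      push_neg at hall
      obtain ⟨j, hj⟩ := hall
      apply Matrix.det_eq_zero_of_column_eq_zero j
      intro i
      simp [hL, hj]
  rw [← hLdet]
  exact Filter.Tendsto.congr (fun n => (key n).symm) hdetlim
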